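/- Fix n ≥ 4, ρ ∈ [0,1] and b_n > 0. Then for every function f : Ω_n → ℝ: √n ∫ (η(1) − η(n)) f(η) dν_ρ(η) − n² (b_n/2) ∫ (f(η^{1→n}) − f(η))² dν_ρ(η) ≤ ρ/(2 b_n n). In particular, sup_f { √n ∫ (η(1) − η(n)) f dν_ρ − n² (b_n/2) ∫ (f∘(·)^{1→n} − f)² dν_ρ } ≤ ρ/(2 b_n n), the supremum being over all f : Ω_n → ℝ. -/
import Mathlib


noncomputable section

open Finset

/-- `η^{1→n−1}`: remove the top card and insert it at position `n−1`.
Positions are labelled by `ZMod n`, with position `n` corresponding to `0`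
and position `n−1` to `-1`. -/
def mapA {n : ℕ} (η : ZMod n → Fin 2) : ZMod n → Fin 2 :=
  fun x => if x = 0 then η 0 else if x = -1 then η 1 else η (x + 1)

/-- `η^{1→n}`: remove the top card and insert it at the bottom,
i.e. `η^{1→n}(x) = η(x+1)` cyclically. -/
def mapB {n : ℕ} (η : ZMod n → Fin 2) : ZMod n → Fin 2 :=
  fun x => η (x + 1)

/-- `η^{n→1}`: remove the bottom card and insert it at the top,
i.e. `η^{n→1}(x) = η(x−1)` cyclically. -/
def mapC {n : ℕ} (η : ZMod n → Fin 2) : ZMod n → Fin 2 :=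
  fun x => η (x - 1)

/-- `η^{1↔2}`: transpose the coordinates at positions `1` and `2`. -/
def mapD {n : ℕ} (η : ZMod n → Fin 2) : ZMod n → Fin 2 :=
  fun x => if x = 1 then η 2 else if x = 2 then η 1 else η x

/-- The particle-system generator `𝓛ₙ`. -/
def gen {n : ℕ} (a b c d : ℝ) (f : (ZMod n → Fin 2) → ℝ) (η : ZMod n → Fin 2) : ℝ :=
  a * (f (mapA η) - f η) + b * (f (mapB η) - f η)
    + c * (f (mapC η) - f η) + d * (f (mapD η) - f η)

/-- The Bernoulli product measure `ν_ρ` on `Ω_n = {0,1}^{ℤ_n}`. -/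
def nuMeasure {n : ℕ} [NeZero n] (ρ : ℝ) (η : ZMod n → Fin 2) : ℝ :=
  ∏ x : ZMod n, (ρ * ((η x : ℕ) : ℝ) + (1 - ρ) * (1 - ((η x : ℕ) : ℝ)))

/-- `∫ F dν_ρ = ∑_η ν_ρ(η) F(η)`. -/
def integral {n : ℕ} [NeZero n] (ρ : ℝ) (F : (ZMod n → Fin 2) → ℝ) : ℝ :=
  ∑ η : ZMod n → Fin 2, nuMeasure ρ η * F η


/-!
STATEMENT 13.  Kipnis–Varadhan-type variational bound: for `b_n > 0` and every
`f : Ω_n → ℝ`,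
`√n ∫(η(1)−η(n)) f dν_ρ − n²(b_n/2) ∫(f∘(·)^{1→n} − f)² dν_ρ ≤ ρ/(2 b_n n)`,
hence the supremum over all `f` is bounded by `ρ/(2 b_n n)`.
Position `n` is `0` in `ZMod n`.
-/

private lemma fin2_cast (v : Fin 2) : ((v : ℕ) : ℝ) = 0 ∨ ((v : ℕ) : ℝ) = 1 := by
  fin_cases v <;> simp

private lemma w_nonneg {ρ : ℝ} (hρ : ρ ∈ Set.Icc (0:ℝ) 1) (v : Fin 2) :
    0 ≤ ρ * ((v : ℕ) : ℝ) + (1 - ρ) * (1 - ((v : ℕ) : ℝ)) := by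
  obtain ⟨h0, h1⟩ := hρ
  fin_cases v <;> simp <;> linarith

private lemma nu_nonneg {n : ℕ} [NeZero n] {ρ : ℝ} (hρ : ρ ∈ Set.Icc (0:ℝ) 1)
    (η : ZMod n → Fin 2) : 0 ≤ nuMeasure ρ η :=
  Finset.prod_nonneg fun x _ => w_nonneg hρ (η x)

private lemma nu_mapB {n : ℕ} [NeZero n] (ρ : ℝ) (η : ZMod n → Fin 2) :
    nuMeasure ρ (mapB η) = nuMeasure ρ η := by
  unfold nuMeasure mapB
  exact Fintype.prod_equiv (Equiv.addRight (1 : ZMod n)) _ _ (fun x => rfl)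

private lemma mapB_bij {n : ℕ} : Function.Bijective (mapB (n := n)) :=
  Function.bijective_iff_has_inverse.mpr
    ⟨mapC, fun η => funext fun x => by simp [mapB, mapC],
      fun η => funext fun x => by simp [mapB, mapC]⟩

private lemma integral_shift {n : ℕ} [NeZero n] (ρ : ℝ) (G : (ZMod n → Fin 2) → ℝ) :
    ∑ η : ZMod n → Fin 2, nuMeasure ρ η * G (mapB η)
      = ∑ η : ZMod n → Fin 2, nuMeasure ρ η * G η := by
  refine Fintype.sum_bijective mapB mapB_bij _ _ fun η => ?_
  rw [nu_mapB]

private lemma sum_nu_coord {n : ℕ} [NeZero n] (ρ : ℝ) :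
    ∑ η : ZMod n → Fin 2, nuMeasure ρ η * ((η 1 : ℕ) : ℝ) = ρ := by
  have key : ∀ η : ZMod n → Fin 2, nuMeasure ρ η * ((η 1 : ℕ) : ℝ)
      = ∏ x : ZMod n,
          ((ρ * ((η x : ℕ) : ℝ) + (1 - ρ) * (1 - ((η x : ℕ) : ℝ)))
            * (if x = 1 then ((η x : ℕ) : ℝ) else 1)) := by
    intro η
    rw [Finset.prod_mul_distrib,
      Finset.prod_ite_eq' Finset.univ (1 : ZMod n) (fun x => ((η x : ℕ) : ℝ))]
    simp [nuMeasure]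
  simp_rw [key]
  have hprod := Finset.prod_univ_sum (fun _ : ZMod n => (Finset.univ : Finset (Fin 2)))
    (fun x v => (ρ * ((v : ℕ) : ℝ) + (1 - ρ) * (1 - ((v : ℕ) : ℝ)))
      * (if x = 1 then ((v : ℕ) : ℝ) else 1))
  rw [Fintype.piFinset_univ] at hprod
  rw [← hprod]
  have hx : ∀ x : ZMod n,
      (∑ v : Fin 2, ((ρ * ((v : ℕ) : ℝ) + (1 - ρ) * (1 - ((v : ℕ) : ℝ)))
        * (if x = 1 then ((v : ℕ) : ℝ) else 1))) = if x = 1 then ρ else 1 := by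
    intro x
    by_cases h : x = 1 <;> simp [h, Fin.sum_univ_two] <;> ring
  simp_rw [hx]
  rw [Finset.prod_ite_eq' Finset.univ (1 : ZMod n) (fun _ => ρ)]
  simp

theorem variational_bound_top_bottom {n : ℕ} [NeZero n] (hn : 4 ≤ n)
    (ρ : ℝ) (hρ : ρ ∈ Set.Icc (0 : ℝ) 1) (b : ℝ) (hb : 0 < b) :
    (∀ f : (ZMod n → Fin 2) → ℝ,
      Real.sqrt n * integral ρ (fun η => (((η 1 : ℕ) : ℝ) - ((η 0 : ℕ) : ℝ)) * f η)
          - (n : ℝ) ^ 2 * (b / 2) * integral ρ (fun η => (f (mapB η) - f η) ^ 2)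
        ≤ ρ / (2 * b * n))
    ∧ (⨆ f : (ZMod n → Fin 2) → ℝ,
        (Real.sqrt n * integral ρ (fun η => (((η 1 : ℕ) : ℝ) - ((η 0 : ℕ) : ℝ)) * f η)
          - (n : ℝ) ^ 2 * (b / 2) * integral ρ (fun η => (f (mapB η) - f η) ^ 2)))
        ≤ ρ / (2 * b * n) := by
  have hn0 : (0:ℝ) < n := by
    have : (4:ℝ) ≤ n := by exact_mod_cast hn
    linarith
  set s := Real.sqrt n with hsdef
  have hs2 : s ^ 2 = n := Real.sq_sqrt hn0.le
  have h2bn : (0:ℝ) < 2 * b * n := by positivity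
  have hmain : ∀ f : (ZMod n → Fin 2) → ℝ,
      s * integral ρ (fun η => (((η 1 : ℕ) : ℝ) - ((η 0 : ℕ) : ℝ)) * f η)
        - (n : ℝ) ^ 2 * (b / 2) * integral ρ (fun η => (f (mapB η) - f η) ^ 2)
        ≤ ρ / (2 * b * n) := by
    intro f
    have h0 : ∑ η : ZMod n → Fin 2, nuMeasure ρ η * (((η 0 : ℕ) : ℝ) * f η)
        = ∑ η : ZMod n → Fin 2, nuMeasure ρ η * (((η 1 : ℕ) : ℝ) * f (mapB η)) := by
      rw [← integral_shift ρ (fun η => ((η 0 : ℕ) : ℝ) * f η)]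
      refine Finset.sum_congr rfl fun η _ => ?_
      simp [mapB]
    have hA : integral ρ (fun η => (((η 1 : ℕ) : ℝ) - ((η 0 : ℕ) : ℝ)) * f η)
        = ∑ η : ZMod n → Fin 2,
            nuMeasure ρ η * (((η 1 : ℕ) : ℝ) * (f η - f (mapB η))) := by
      simp only [integral]
      have e1 : ∀ η : ZMod n → Fin 2,
          nuMeasure ρ η * ((((η 1 : ℕ) : ℝ) - ((η 0 : ℕ) : ℝ)) * f η)
            = nuMeasure ρ η * (((η 1 : ℕ) : ℝ) * f η)
              - nuMeasure ρ η * (((η 0 : ℕ) : ℝ) * f η) := fun η => by ring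
      have e2 : ∀ η : ZMod n → Fin 2,
          nuMeasure ρ η * (((η 1 : ℕ) : ℝ) * (f η - f (mapB η)))
            = nuMeasure ρ η * (((η 1 : ℕ) : ℝ) * f η)
              - nuMeasure ρ η * (((η 1 : ℕ) : ℝ) * f (mapB η)) := fun η => by ring
      simp_rw [e1, e2, Finset.sum_sub_distrib, h0]
    rw [hA]
    simp only [integral]
    have hcomb : s * (∑ η : ZMod n → Fin 2,
          nuMeasure ρ η * (((η 1 : ℕ) : ℝ) * (f η - f (mapB η))))
        - (n : ℝ) ^ 2 * (b / 2) * ∑ η : ZMod n → Fin 2,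
            nuMeasure ρ η * (f (mapB η) - f η) ^ 2
        = ∑ η : ZMod n → Fin 2,
            nuMeasure ρ η * (s * (((η 1 : ℕ) : ℝ) * (f η - f (mapB η)))
              - (n : ℝ) ^ 2 * (b / 2) * (f (mapB η) - f η) ^ 2) := by
      rw [Finset.mul_sum, Finset.mul_sum, ← Finset.sum_sub_distrib]
      exact Finset.sum_congr rfl fun η _ => by ring
    rw [hcomb]
    have hpt : ∀ η : ZMod n → Fin 2,
        nuMeasure ρ η * (s * (((η 1 : ℕ) : ℝ) * (f η - f (mapB η)))
            - (n : ℝ) ^ 2 * (b / 2) * (f (mapB η) - f η) ^ 2)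
          ≤ nuMeasure ρ η * (((η 1 : ℕ) : ℝ) / (2 * b * n)) := by
      intro η
      refine mul_le_mul_of_nonneg_left ?_ (nu_nonneg hρ η)
      set c : ℝ := ((η 1 : ℕ) : ℝ) with hc
      set d : ℝ := f η - f (mapB η) with hd
      have hc2 : c ^ 2 = c := by
        rcases fin2_cast (η 1) with h | h <;> rw [hc, h] <;> ring
      have hdd : (f (mapB η) - f η) ^ 2 = d ^ 2 := by rw [hd]; ring
      clear_value c d
      rw [hdd, le_div_iff₀ h2bn]
      have hexp : (b * n * s * d - c) ^ 2
          = b ^ 2 * (n : ℝ) ^ 2 * (s ^ 2) * d ^ 2 - 2 * (b * n * s * d) * c + c ^ 2 := by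
        ring
      rw [hs2, hc2] at hexp
      nlinarith [sq_nonneg (b * n * s * d - c), hexp]
    calc (∑ η : ZMod n → Fin 2,
            nuMeasure ρ η * (s * (((η 1 : ℕ) : ℝ) * (f η - f (mapB η)))
              - (n : ℝ) ^ 2 * (b / 2) * (f (mapB η) - f η) ^ 2))
        ≤ ∑ η : ZMod n → Fin 2, nuMeasure ρ η * (((η 1 : ℕ) : ℝ) / (2 * b * n)) :=
            Finset.sum_le_sum fun η _ => hpt η
      _ = (∑ η : ZMod n → Fin 2, nuMeasure ρ η * ((η 1 : ℕ) : ℝ)) / (2 * b * n) := by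
            rw [Finset.sum_div]
            exact Finset.sum_congr rfl fun η _ => by ring
      _ = ρ / (2 * b * n) := by rw [sum_nu_coord]
  exact ⟨hmain, ciSup_le hmain⟩
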